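/- Perfect-privacy utility upper bound: if random variables X, Y, U (finite-valued, on a common probability space) satisfy I[U:X] = 0 (i.e., U carries no information about X), then I[U:Y] ≤ H[Y|X]. -/

import Mathlib

open MeasureTheory ProbabilityTheory Real

noncomputable section

variable {Ω : Type*} [MeasurableSpace Ω]

/-- Shannon entropy (natural logarithm) of a finite-valued random variable `Z` under `μ`. -/
def ent {S : Type*} [Fintype S] (μ : Measure Ω) (Z : Ω → S) : ℝ :=
  ∑ z : S, Real.negMulLog (μ (Z ⁻¹' {z})).toReal

/-- Conditional entropy `H[Z₁ | Z₂] = H[(Z₁,Z₂)] - H[Z₂]`. -/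
def condEnt {S T : Type*} [Fintype S] [Fintype T] (μ : Measure Ω)
    (Z₁ : Ω → S) (Z₂ : Ω → T) : ℝ :=
  ent μ (fun ω => (Z₁ ω, Z₂ ω)) - ent μ Z₂

/-- Mutual information `I[Z₁ : Z₂] = H[Z₁] + H[Z₂] - H[(Z₁,Z₂)]`. -/
def mutInfo {S T : Type*} [Fintype S] [Fintype T] (μ : Measure Ω)
    (Z₁ : Ω → S) (Z₂ : Ω → T) : ℝ :=
  ent μ Z₁ + ent μ Z₂ - ent μ (fun ω => (Z₁ ω, Z₂ ω))

/-- Conditional mutual information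
`I[Z₁ : Z₂ | Z₃] = H[(Z₁,Z₃)] + H[(Z₂,Z₃)] - H[(Z₁,Z₂,Z₃)] - H[Z₃]`. -/
def condMutInfo {S T R : Type*} [Fintype S] [Fintype T] [Fintype R] (μ : Measure Ω)
    (Z₁ : Ω → S) (Z₂ : Ω → T) (Z₃ : Ω → R) : ℝ :=
  ent μ (fun ω => (Z₁ ω, Z₃ ω)) + ent μ (fun ω => (Z₂ ω, Z₃ ω))
    - ent μ (fun ω => (Z₁ ω, Z₂ ω, Z₃ ω)) - ent μ Z₃

lemma my_negMulLog_add_le {a b : ℝ} (ha : 0 ≤ a) (hb : 0 ≤ b) :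
    Real.negMulLog (a + b) ≤ Real.negMulLog a + Real.negMulLog b := by
  rcases eq_or_lt_of_le ha with rfl | ha'
  · simp
  rcases eq_or_lt_of_le hb with rfl | hb'
  · simp
  have h1 : Real.log a ≤ Real.log (a + b) := Real.log_le_log ha' (by linarith)
  have h2 : Real.log b ≤ Real.log (a + b) := Real.log_le_log hb' (by linarith)
  simp only [Real.negMulLog, neg_mul]
  nlinarith [mul_le_mul_of_nonneg_left h1 ha, mul_le_mul_of_nonneg_left h2 hb]

lemma my_negMulLog_sum_le {ι : Type*} (s : Finset ι) (f : ι → ℝ) (hf : ∀ i ∈ s, 0 ≤ f i) :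
    Real.negMulLog (∑ i ∈ s, f i) ≤ ∑ i ∈ s, Real.negMulLog (f i) := by
  induction s using Finset.cons_induction with
  | empty => simp
  | cons a s ha ih =>
    rw [Finset.sum_cons, Finset.sum_cons]
    calc Real.negMulLog (f a + ∑ i ∈ s, f i)
        ≤ Real.negMulLog (f a) + Real.negMulLog (∑ i ∈ s, f i) :=
          my_negMulLog_add_le (hf a (Finset.mem_cons_self a s))
            (Finset.sum_nonneg fun i hi => hf i (Finset.mem_cons_of_mem hi))
      _ ≤ _ := add_le_add (le_refl _) (ih fun i hi => hf i (Finset.mem_cons_of_mem hi))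

lemma measure_eq_sum_fiber {T : Type*} [Fintype T] [MeasurableSpace T]
    [MeasurableSingletonClass T]
    (μ : Measure Ω) [IsFiniteMeasure μ] {Z : Ω → T} (hZ : Measurable Z) {s : Set Ω}
    (hs : MeasurableSet s) :
    (μ s).toReal = ∑ t : T, (μ (s ∩ Z ⁻¹' {t})).toReal := by
  rw [← ENNReal.toReal_sum (fun t _ => measure_ne_top μ _)]
  congr 1
  have h : s = ⋃ t ∈ (Finset.univ : Finset T), s ∩ Z ⁻¹' {t} := by
    ext ω; simp
  conv_lhs => rw [h]
  rw [measure_biUnion_finset]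
  · intro a _ b _ hab
    simp only [Function.onFun]
    rw [Set.disjoint_left]
    rintro ω ⟨-, h1⟩ ⟨-, h2⟩
    simp only [Set.mem_preimage, Set.mem_singleton_iff] at h1 h2
    exact hab (h1 ▸ h2 ▸ rfl)
  · exact fun t _ => hs.inter (hZ (measurableSet_singleton t))

lemma ent_comp_equiv {S T : Type*} [Fintype S] [Fintype T] (μ : Measure Ω) (Z : Ω → S)
    (e : S ≃ T) : ent μ (fun ω => e (Z ω)) = ent μ Z := by
  unfold ent
  rw [← Equiv.sum_comp e (fun t => Real.negMulLog (μ ((fun ω => e (Z ω)) ⁻¹' {t})).toReal)]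
  apply Finset.sum_congr rfl
  intro s _
  have h : (fun ω => e (Z ω)) ⁻¹' {e s} = Z ⁻¹' {s} := by ext ω; simp
  rw [h]

lemma ent_fst_le {S T : Type*} [Fintype S] [Fintype T] [MeasurableSpace S]
    [MeasurableSingletonClass S] [MeasurableSpace T] [MeasurableSingletonClass T]
    (μ : Measure Ω) [IsFiniteMeasure μ] {A : Ω → S} {B : Ω → T}
    (hA : Measurable A) (hB : Measurable B) :
    ent μ A ≤ ent μ (fun ω => (A ω, B ω)) := by
  unfold ent
  rw [Fintype.sum_prod_type]
  apply Finset.sum_le_sum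
  intro s _
  have h : (μ (A ⁻¹' {s})).toReal
      = ∑ t : T, (μ ((fun ω => (A ω, B ω)) ⁻¹' {(s, t)})).toReal := by
    rw [measure_eq_sum_fiber μ hB (hA (measurableSet_singleton s))]
    refine Finset.sum_congr rfl fun t _ => ?_
    congr 2
    ext ω
    simp [Prod.ext_iff, and_comm]
  rw [h]
  exact my_negMulLog_sum_le _ _ (fun t _ => ENNReal.toReal_nonneg)

lemma ent_submodular {𝒳 𝒴 𝒰 : Type*} [Fintype 𝒳] [MeasurableSpace 𝒳] [MeasurableSingletonClass 𝒳]
    [Fintype 𝒴] [MeasurableSpace 𝒴] [MeasurableSingletonClass 𝒴]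
    [Fintype 𝒰] [MeasurableSpace 𝒰] [MeasurableSingletonClass 𝒰]
    (μ : Measure Ω) [IsFiniteMeasure μ]
    {X : Ω → 𝒳} {Y : Ω → 𝒴} {U : Ω → 𝒰}
    (hX : Measurable X) (hY : Measurable Y) (hU : Measurable U) :
    ent μ (fun ω => (X ω, Y ω, U ω)) + ent μ Y
      ≤ ent μ (fun ω => (X ω, Y ω)) + ent μ (fun ω => (Y ω, U ω)) := by
  set p : 𝒳 → 𝒴 → 𝒰 → ℝ :=
    fun x y u => (μ ((fun ω => (X ω, Y ω, U ω)) ⁻¹' {(x, y, u)})).toReal with hp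
  set pXY : 𝒳 → 𝒴 → ℝ :=
    fun x y => (μ ((fun ω => (X ω, Y ω)) ⁻¹' {(x, y)})).toReal with hpXY
  set pYU : 𝒴 → 𝒰 → ℝ :=
    fun y u => (μ ((fun ω => (Y ω, U ω)) ⁻¹' {(y, u)})).toReal with hpYU
  set pY : 𝒴 → ℝ := fun y => (μ (Y ⁻¹' {y})).toReal with hpY
  have pnn : ∀ x y u, 0 ≤ p x y u := fun _ _ _ => ENNReal.toReal_nonneg
  have pXYnn : ∀ x y, 0 ≤ pXY x y := fun _ _ => ENNReal.toReal_nonneg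
  have pYUnn : ∀ y u, 0 ≤ pYU y u := fun _ _ => ENNReal.toReal_nonneg
  -- marginal identities
  have hXYm : ∀ x y, pXY x y = ∑ u : 𝒰, p x y u := by
    intro x y
    rw [hpXY]
    simp only
    rw [measure_eq_sum_fiber μ hU ((hX.prodMk hY) (measurableSet_singleton (x, y)))]
    refine Finset.sum_congr rfl fun u _ => ?_
    congr 2
    ext ω
    simp [Prod.ext_iff, and_assoc]
  have hYUm : ∀ y u, pYU y u = ∑ x : 𝒳, p x y u := by
    intro y u
    rw [hpYU]
    simp only
    rw [measure_eq_sum_fiber μ hX ((hY.prodMk hU) (measurableSet_singleton (y, u)))]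
    refine Finset.sum_congr rfl fun x _ => ?_
    congr 2
    ext ω
    simp [Prod.ext_iff]
    tauto
  have hYm : ∀ y, pY y = ∑ x : 𝒳, pXY x y := by
    intro y
    rw [hpY]
    simp only
    rw [measure_eq_sum_fiber μ hX (hY (measurableSet_singleton y))]
    refine Finset.sum_congr rfl fun x _ => ?_
    congr 2
    ext ω
    simp [Prod.ext_iff, and_comm]
  have hYm2 : ∀ y, pY y = ∑ u : 𝒰, pYU y u := by
    intro y
    rw [hpY]
    simp only
    rw [measure_eq_sum_fiber μ hU (hY (measurableSet_singleton y))]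
    refine Finset.sum_congr rfl fun u _ => ?_
    congr 2
    ext ω
    simp [Prod.ext_iff]
  have pYnn : ∀ y, 0 ≤ pY y := fun _ => ENNReal.toReal_nonneg
  have p_le_pXY : ∀ x y u, p x y u ≤ pXY x y := by
    intro x y u
    rw [hXYm]
    exact Finset.single_le_sum (fun u _ => pnn x y u) (Finset.mem_univ u)
  have p_le_pYU : ∀ x y u, p x y u ≤ pYU y u := by
    intro x y u
    rw [hYUm]
    exact Finset.single_le_sum (fun x _ => pnn x y u) (Finset.mem_univ x)
  have pXY_le_pY : ∀ x y, pXY x y ≤ pY y := by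
    intro x y
    rw [hYm]
    exact Finset.single_le_sum (fun x _ => pXYnn x y) (Finset.mem_univ x)
  set q : 𝒳 → 𝒴 → 𝒰 → ℝ := fun x y u => pXY x y * pYU y u / pY y with hq
  -- pointwise Gibbs inequality
  have key : ∀ x y u,
      p x y u * Real.log (pXY x y) + p x y u * Real.log (pYU y u)
        - p x y u * Real.log (pY y) - p x y u * Real.log (p x y u)
      ≤ q x y u - p x y u := by
    intro x y u
    rcases eq_or_lt_of_le (pnn x y u) with hz | hz
    · rw [← hz]
      simp only [zero_mul, sub_zero, add_zero, sub_zero, zero_add]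
      have : 0 ≤ q x y u := div_nonneg (mul_nonneg (pXYnn x y) (pYUnn y u)) (pYnn y)
      linarith
    · have h1 : 0 < pXY x y := lt_of_lt_of_le hz (p_le_pXY x y u)
      have h2 : 0 < pYU y u := lt_of_lt_of_le hz (p_le_pYU x y u)
      have h3 : 0 < pY y := lt_of_lt_of_le h1 (pXY_le_pY x y)
      have hq0 : 0 < q x y u := div_pos (mul_pos h1 h2) h3
      have hlog : Real.log (q x y u / p x y u) ≤ q x y u / p x y u - 1 :=
        Real.log_le_sub_one_of_pos (div_pos hq0 hz)
      have hexp : Real.log (q x y u / p x y u)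
          = Real.log (pXY x y) + Real.log (pYU y u) - Real.log (pY y)
            - Real.log (p x y u) := by
        rw [Real.log_div hq0.ne' hz.ne', hq, Real.log_div (mul_pos h1 h2).ne' h3.ne',
          Real.log_mul h1.ne' h2.ne']
      have := mul_le_mul_of_nonneg_left hlog (le_of_lt hz)
      rw [hexp] at this
      calc p x y u * Real.log (pXY x y) + p x y u * Real.log (pYU y u)
            - p x y u * Real.log (pY y) - p x y u * Real.log (p x y u)
          = p x y u * (Real.log (pXY x y) + Real.log (pYU y u) - Real.log (pY y)
              - Real.log (p x y u)) := by ring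
        _ ≤ p x y u * (q x y u / p x y u - 1) := this
        _ = q x y u - p x y u := by field_simp
  -- sum of q equals sum of p
  have hqsum : ∀ y : 𝒴, ∑ x : 𝒳, ∑ u : 𝒰, q x y u = pY y := by
    intro y
    rcases eq_or_lt_of_le (pYnn y) with hz | hz
    · have hall : ∀ x, pXY x y = 0 := fun x =>
        le_antisymm (le_trans (pXY_le_pY x y) (le_of_eq hz.symm)) (pXYnn x y)
      rw [← hz]
      apply Finset.sum_eq_zero
      intro x _
      apply Finset.sum_eq_zero
      intro u _
      rw [hq]
      simp [hall x]
    · have inner : ∀ x, ∑ u : 𝒰, q x y u = pXY x y := by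
        intro x
        rw [hq]
        simp only
        rw [← Finset.sum_div, ← Finset.mul_sum, ← hYm2]
        field_simp
      rw [Finset.sum_congr rfl fun x _ => inner x, ← hYm]
  have hpsum : ∀ x y, ∑ u : 𝒰, p x y u = pXY x y := fun x y => (hXYm x y).symm
  -- entropy expressions
  have entT : ent μ (fun ω => (X ω, Y ω, U ω))
      = -∑ x : 𝒳, ∑ y : 𝒴, ∑ u : 𝒰, p x y u * Real.log (p x y u) := by
    unfold ent
    rw [Fintype.sum_prod_type]
    simp_rw [Fintype.sum_prod_type]
    simp [Real.negMulLog, Finset.sum_neg_distrib, hp]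
  have entXY : ent μ (fun ω => (X ω, Y ω))
      = -∑ x : 𝒳, ∑ y : 𝒴, pXY x y * Real.log (pXY x y) := by
    unfold ent
    rw [Fintype.sum_prod_type]
    simp [Real.negMulLog, Finset.sum_neg_distrib, hpXY]
  have entYU : ent μ (fun ω => (Y ω, U ω))
      = -∑ y : 𝒴, ∑ u : 𝒰, pYU y u * Real.log (pYU y u) := by
    unfold ent
    rw [Fintype.sum_prod_type]
    simp [Real.negMulLog, Finset.sum_neg_distrib, hpYU]
  have entY : ent μ Y = -∑ y : 𝒴, pY y * Real.log (pY y) := by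
    unfold ent
    simp [Real.negMulLog, Finset.sum_neg_distrib, hpY]
  -- sum the key inequality
  have total : ∑ x : 𝒳, ∑ y : 𝒴, ∑ u : 𝒰,
      (p x y u * Real.log (pXY x y) + p x y u * Real.log (pYU y u)
        - p x y u * Real.log (pY y) - p x y u * Real.log (p x y u))
      ≤ ∑ x : 𝒳, ∑ y : 𝒴, ∑ u : 𝒰, (q x y u - p x y u) := by
    refine Finset.sum_le_sum fun x _ => Finset.sum_le_sum fun y _ =>
      Finset.sum_le_sum fun u _ => key x y u
  have hrhs : ∑ x : 𝒳, ∑ y : 𝒴, ∑ u : 𝒰, (q x y u - p x y u) = 0 := by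
    simp_rw [Finset.sum_sub_distrib]
    have h1 : ∑ x : 𝒳, ∑ y : 𝒴, ∑ u : 𝒰, q x y u = ∑ y : 𝒴, pY y := by
      rw [Finset.sum_comm]
      exact Finset.sum_congr rfl fun y _ => hqsum y
    have h2 : ∑ x : 𝒳, ∑ y : 𝒴, ∑ u : 𝒰, p x y u = ∑ y : 𝒴, pY y := by
      simp_rw [hpsum]
      rw [Finset.sum_comm]
      exact Finset.sum_congr rfl fun y _ => (hYm y).symm
    rw [h1, h2]
    ring
  -- identify the four terms
  have t1 : ∑ x : 𝒳, ∑ y : 𝒴, ∑ u : 𝒰, p x y u * Real.log (pXY x y)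
      = ∑ x : 𝒳, ∑ y : 𝒴, pXY x y * Real.log (pXY x y) := by
    refine Finset.sum_congr rfl fun x _ => Finset.sum_congr rfl fun y _ => ?_
    rw [← Finset.sum_mul, hpsum]
  have t2 : ∑ x : 𝒳, ∑ y : 𝒴, ∑ u : 𝒰, p x y u * Real.log (pYU y u)
      = ∑ y : 𝒴, ∑ u : 𝒰, pYU y u * Real.log (pYU y u) := by
    rw [Finset.sum_comm]
    refine Finset.sum_congr rfl fun y _ => ?_
    rw [Finset.sum_comm]
    refine Finset.sum_congr rfl fun u _ => ?_
    rw [← Finset.sum_mul, ← hYUm]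
  have t3 : ∑ x : 𝒳, ∑ y : 𝒴, ∑ u : 𝒰, p x y u * Real.log (pY y)
      = ∑ y : 𝒴, pY y * Real.log (pY y) := by
    rw [Finset.sum_comm]
    refine Finset.sum_congr rfl fun y _ => ?_
    have hx : ∀ x, ∑ u : 𝒰, p x y u * Real.log (pY y) = pXY x y * Real.log (pY y) :=
      fun x => by rw [← Finset.sum_mul, hpsum]
    rw [Finset.sum_congr rfl fun x _ => hx x, ← Finset.sum_mul, ← hYm]
  -- combine
  have expand : ∑ x : 𝒳, ∑ y : 𝒴, ∑ u : 𝒰,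
      (p x y u * Real.log (pXY x y) + p x y u * Real.log (pYU y u)
        - p x y u * Real.log (pY y) - p x y u * Real.log (p x y u))
      = (∑ x : 𝒳, ∑ y : 𝒴, ∑ u : 𝒰, p x y u * Real.log (pXY x y))
        + (∑ x : 𝒳, ∑ y : 𝒴, ∑ u : 𝒰, p x y u * Real.log (pYU y u))
        - (∑ x : 𝒳, ∑ y : 𝒴, ∑ u : 𝒰, p x y u * Real.log (pY y))
        - (∑ x : 𝒳, ∑ y : 𝒴, ∑ u : 𝒰, p x y u * Real.log (p x y u)) := by
    simp_rw [Finset.sum_sub_distrib, Finset.sum_add_distrib]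
  rw [expand, hrhs, t1, t2, t3] at total
  rw [entT, entXY, entYU, entY]
  linarith


/-- Perfect-privacy utility upper bound. -/
theorem perfect_privacy_utility_upper_bound {𝒳 𝒴 𝒰 : Type*} [Fintype 𝒳] [Nonempty 𝒳] [MeasurableSpace 𝒳] [MeasurableSingletonClass 𝒳]
    [Fintype 𝒴] [Nonempty 𝒴] [MeasurableSpace 𝒴] [MeasurableSingletonClass 𝒴]
    [Fintype 𝒰] [Nonempty 𝒰] [MeasurableSpace 𝒰] [MeasurableSingletonClass 𝒰]
    (μ : Measure Ω) [IsProbabilityMeasure μ]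
    (X : Ω → 𝒳) (Y : Ω → 𝒴) (U : Ω → 𝒰)
    (hX : Measurable X) (hY : Measurable Y) (hU : Measurable U)
    (hUX : mutInfo μ U X = 0) :
    mutInfo μ U Y ≤ condEnt μ Y X := by
  have hsub := ent_submodular μ hU hY hX
  have hmono : ent μ (fun ω => (U ω, X ω)) ≤ ent μ (fun ω => ((U ω, X ω), Y ω)) :=
    ent_fst_le μ (hU.prodMk hX) hY
  have heq : ent μ (fun ω => (U ω, Y ω, X ω)) = ent μ (fun ω => ((U ω, X ω), Y ω)) :=
    ent_comp_equiv μ (fun ω => ((U ω, X ω), Y ω))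
      ⟨fun p => (p.1.1, p.2, p.1.2), fun p => ((p.1, p.2.2), p.2.1),
        fun _ => rfl, fun _ => rfl⟩
  simp only [mutInfo, condEnt] at hUX ⊢
  linarith
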